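/- Let R be a tree in a finite graph G = (V,E) containing a vertex r. Orient the edges of R away from r to obtain x ∈ {0,1}^E (on the corresponding directed edges). Then there exists f : E → ℝ≥0 such that: x(δ⁻(v)) ≤ 1 for all v ≠ r; x(δ⁻(r)) = 0; f(δ⁻(v)) − f(δ⁺(v)) ≥ x(δ⁻(v)) for all v ≠ r; f(e) ≥ 0 and f(e) ≤ (|V|−1)·x(e) for all edges e. -/

import Mathlib

variable {V : Type} [Fintype V] [DecidableEq V]

/-- Vertices incident to at least one edge of `R`. -/
def incVerts (R : Finset (Sym2 V)) : Finset V :=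
  Finset.univ.filter (fun v => ∃ e ∈ R, v ∈ e)

/-- Reachability in the undirected graph with edge set `R`. -/
def ReachE (R : Finset (Sym2 V)) (u v : V) : Prop :=
  Relation.ReflTransGen (fun a b => s(a, b) ∈ R) u v

/-- `R` is (the edge set of) a tree containing the vertex `r`: every vertex touched by
`R` is connected to `r`, and the number of edges is one less than the number of
vertices (the touched ones together with `r`). -/
def IsRTree (R : Finset (Sym2 V)) (r : V) : Prop :=
  (∀ v ∈ incVerts R, ReachE R r v) ∧ R.card + 1 = (insert r (incVerts R)).card

open Finset

lemma reach_mono {S S' : Finset (Sym2 V)} (h : S ⊆ S') {u v : V} (hr : ReachE S u v) :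
    ReachE S' u v :=
  Relation.ReflTransGen.mono (r := fun a b => s(a, b) ∈ S) (p := fun a b => s(a, b) ∈ S')
    (fun a b hab => h hab) u v hr

lemma reach_symm {S : Finset (Sym2 V)} {u v : V} (hr : ReachE S u v) : ReachE S v u := by
  have hs : Symmetric (fun a b : V => s(a, b) ∈ S) := by
    intro a b h; rwa [Sym2.eq_swap] at h
  haveI : Std.Symm (fun a b : V => s(a, b) ∈ S) := ⟨fun a b h => hs h⟩
  exact Std.Symm.symm (r := Relation.ReflTransGen (fun a b : V => s(a, b) ∈ S)) _ _ hr

lemma reach_trans {S : Finset (Sym2 V)} {u v w : V} (h1 : ReachE S u v) (h2 : ReachE S v w) :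
    ReachE S u w := Relation.ReflTransGen.trans h1 h2

lemma reach_erase_or {S : Finset (Sym2 V)} {u w : V} (h : ReachE S u w) (a b : V) :
    ReachE (S.erase s(a,b)) u w ∨ ReachE (S.erase s(a,b)) u a ∨ ReachE (S.erase s(a,b)) u b := by
  induction h with
  | refl => exact Or.inl .refl
  | @tail x y hx hedge ih =>
    by_cases he : s(x, y) = s(a, b)
    · rcases Sym2.eq_iff.mp he with ⟨hxa, hyb⟩ | ⟨hxb, hya⟩
      · subst hxa
        rcases ih with h' | h' | h'
        · exact Or.inr (Or.inl h')
        · exact Or.inr (Or.inl h')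
        · exact Or.inr (Or.inr h')
      · subst hxb
        rcases ih with h' | h' | h'
        · exact Or.inr (Or.inr h')
        · exact Or.inr (Or.inl h')
        · exact Or.inr (Or.inr h')
    · have hedge' : s(x, y) ∈ S.erase s(a, b) := Finset.mem_erase.mpr ⟨he, hedge⟩
      rcases ih with h' | h' | h'
      · exact Or.inl (h'.tail hedge')
      · exact Or.inr (Or.inl h')
      · exact Or.inr (Or.inr h')

lemma reach_side {S : Finset (Sym2 V)} {r a b : V}
    (hA : ReachE (S.erase s(a,b)) r a) {w : V} (h : ReachE S r w) :
    ReachE (S.erase s(a,b)) r w ∨ ReachE (S.erase s(a,b)) b w := by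
  induction h with
  | refl => exact Or.inl .refl
  | @tail x y hx hedge ih =>
    by_cases he : s(x, y) = s(a, b)
    · rcases Sym2.eq_iff.mp he with ⟨hxa, hyb⟩ | ⟨hxb, hya⟩
      · subst hyb; exact Or.inr .refl
      · subst hya; exact Or.inl hA
    · have hedge' : s(x, y) ∈ S.erase s(a, b) := Finset.mem_erase.mpr ⟨he, hedge⟩
      rcases ih with h' | h'
      · exact Or.inl (h'.tail hedge')
      · exact Or.inr (h'.tail hedge')

def reachN (S : Finset (Sym2 V)) (r : V) : ℕ → V → Prop
  | 0, v => v = r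
  | n+1, v => ∃ u, reachN S r n u ∧ s(u, v) ∈ S

lemma reach_iff_reachN {S : Finset (Sym2 V)} {r v : V} :
    ReachE S r v ↔ ∃ n, reachN S r n v := by
  constructor
  · intro h
    induction h with
    | refl => exact ⟨0, rfl⟩
    | tail _ hedge ih =>
      obtain ⟨n, hn⟩ := ih
      exact ⟨n + 1, _, hn, hedge⟩
  · rintro ⟨n, h⟩
    induction n generalizing v with
    | zero => rw [show v = r from h]; exact Relation.ReflTransGen.refl
    | succ n ih =>
      obtain ⟨u, hu, he⟩ := h
      exact (ih hu).tail he

open Classical in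
noncomputable def dst (S : Finset (Sym2 V)) (r v : V) : ℕ :=
  if h : ∃ n, reachN S r n v then Nat.find h else 0

open Classical in
lemma dst_spec {S : Finset (Sym2 V)} {r v : V} (h : ReachE S r v) :
    reachN S r (dst S r v) v := by
  rw [dst, dif_pos (reach_iff_reachN.mp h)]
  exact Nat.find_spec (reach_iff_reachN.mp h)

open Classical in
lemma dst_le {S : Finset (Sym2 V)} {r v : V} {n : ℕ} (h : reachN S r n v) :
    dst S r v ≤ n := by
  rw [dst, dif_pos ⟨n, h⟩]
  exact Nat.find_min' _ h

lemma exists_parent {S : Finset (Sym2 V)} {r v : V} (hv : ReachE S r v) (hvr : v ≠ r) :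
    ∃ u, s(u, v) ∈ S ∧ dst S r u < dst S r v ∧ ReachE S r u := by
  have hd := dst_spec hv
  cases hmn : dst S r v with
  | zero => rw [hmn] at hd; exact absurd hd hvr
  | succ n =>
    rw [hmn] at hd
    obtain ⟨u, hu, he⟩ := hd
    have hle : dst S r u ≤ n := dst_le hu
    exact ⟨u, he, by omega, reach_iff_reachN.mpr ⟨n, hu⟩⟩

open Classical in
noncomputable def par (S : Finset (Sym2 V)) (r v : V) : V :=
  if h : ∃ u, s(u, v) ∈ S ∧ dst S r u < dst S r v ∧ ReachE S r u then h.choose else v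

lemma par_spec {S : Finset (Sym2 V)} {r v : V} (hv : ReachE S r v) (hvr : v ≠ r) :
    s(par S r v, v) ∈ S ∧ dst S r (par S r v) < dst S r v ∧ ReachE S r (par S r v) := by
  rw [par, dif_pos (exists_parent hv hvr)]
  exact (exists_parent hv hvr).choose_spec
open Classical in
noncomputable def Rch (S : Finset (Sym2 V)) (r : V) : Finset V :=
  Finset.univ.filter (fun v => ReachE S r v)

open Classical in
lemma mem_Rch {S : Finset (Sym2 V)} {r v : V} : v ∈ Rch S r ↔ ReachE S r v := by
  simp [Rch]

lemma r_mem_Rch {S : Finset (Sym2 V)} {r : V} : r ∈ Rch S r :=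
  mem_Rch.mpr Relation.ReflTransGen.refl

lemma par_injOn (S : Finset (Sym2 V)) (r : V) :
    Set.InjOn (fun v => s(par S r v, v)) ((Rch S r).erase r) := by
  intro v hv v' hv' heq
  simp only [Finset.mem_coe, Finset.mem_erase, mem_Rch] at hv hv'
  rcases Sym2.eq_iff.mp heq with ⟨_, h2⟩ | ⟨h1, h2⟩
  · exact h2
  · exfalso
    have d1 := (par_spec hv.2 hv.1).2.1
    have d2 := (par_spec hv'.2 hv'.1).2.1
    rw [h1] at d1; rw [← h2] at d2
    omega

lemma card_reach_le (S : Finset (Sym2 V)) (r : V) : (Rch S r).card ≤ S.card + 1 := by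
  have h1 : ((Rch S r).erase r).card ≤ S.card := by
    apply Finset.card_le_card_of_injOn (fun v => s(par S r v, v))
    · intro v hv
      rw [Finset.mem_coe, Finset.mem_erase, mem_Rch] at hv
      exact (par_spec hv.2 hv.1).1
    · exact par_injOn S r
  have h2 := Finset.card_erase_add_one (r_mem_Rch (S := S) (r := r))
  omega

lemma reach_erase_of_dst_lt {S : Finset (Sym2 V)} {r v : V} (hv : ReachE S r v) (hvr : v ≠ r) :
    ∀ w, ReachE S r w → dst S r w < dst S r v → ReachE (S.erase s(par S r v, v)) r w := by
  suffices h : ∀ n w, dst S r w = n → ReachE S r w → dst S r w < dst S r v →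
      ReachE (S.erase s(par S r v, v)) r w by
    intro w hw hlt; exact h _ w rfl hw hlt
  intro n
  induction n using Nat.strong_induction_on with
  | _ n ih =>
    intro w hwn hw hlt
    by_cases hwr : w = r
    · rw [hwr]; exact Relation.ReflTransGen.refl
    · obtain ⟨u, he, hdu, hu⟩ := exists_parent hw hwr
      have hne : s(u, w) ≠ s(par S r v, v) := by
        intro heq
        rcases Sym2.eq_iff.mp heq with ⟨h1, h2⟩ | ⟨h1, h2⟩
        · rw [h2] at hlt; omega
        · have := (par_spec hv hvr).2.1
          rw [← h2] at this; rw [h1] at hdu; omega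
      have hrec : ReachE (S.erase s(par S r v, v)) r u :=
        ih (dst S r u) (by omega) u rfl hu (by omega)
      exact hrec.tail (Finset.mem_erase.mpr ⟨hne, he⟩)

lemma par_near {S : Finset (Sym2 V)} {r v : V} (hv : ReachE S r v) (hvr : v ≠ r) :
    ReachE (S.erase s(par S r v, v)) r (par S r v) :=
  reach_erase_of_dst_lt hv hvr _ (par_spec hv hvr).2.2 (par_spec hv hvr).2.1
lemma Rch_eq {R : Finset (Sym2 V)} {r : V} (hcon : ∀ v ∈ incVerts R, ReachE R r v) :
    Rch R r = insert r (incVerts R) := by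
  ext v
  rw [mem_Rch, Finset.mem_insert]
  constructor
  · intro h
    rcases h.cases_tail with h | ⟨c, _, he⟩
    · exact Or.inl h
    · refine Or.inr ?_
      simp only [incVerts, Finset.mem_filter, Finset.mem_univ, true_and]
      exact ⟨s(c, v), he, Sym2.mem_mk_right c v⟩
  · rintro (rfl | h)
    · exact Relation.ReflTransGen.refl
    · exact hcon v h

lemma card_Rch {R : Finset (Sym2 V)} {r : V} (hT : IsRTree R r) :
    (Rch R r).card = R.card + 1 := by
  rw [Rch_eq hT.1]; exact hT.2.symm

lemma image_par {R : Finset (Sym2 V)} {r : V} (hT : IsRTree R r) :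
    ((Rch R r).erase r).image (fun v => s(par R r v, v)) = R := by
  apply Finset.eq_of_subset_of_card_le
  · intro e he
    rw [Finset.mem_image] at he
    obtain ⟨v, hv, rfl⟩ := he
    rw [Finset.mem_erase, mem_Rch] at hv
    exact (par_spec hv.2 hv.1).1
  · rw [Finset.card_image_of_injOn (par_injOn R r),
      Finset.card_erase_of_mem (r_mem_Rch), card_Rch hT]
    omega

lemma far {R : Finset (Sym2 V)} {r : V} (hT : IsRTree R r) {v : V}
    (hv : ReachE R r v) (hvr : v ≠ r) :
    ¬ ReachE (R.erase s(par R r v, v)) r v := by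
  intro hbad
  have hA : ReachE (R.erase s(par R r v, v)) r (par R r v) := par_near hv hvr
  have hsub : Rch R r ⊆ Rch (R.erase s(par R r v, v)) r := by
    intro w hw
    rw [mem_Rch] at hw ⊢
    rcases reach_side hA hw with h | h
    · exact h
    · exact hbad.trans h
  have h1 : R.card + 1 ≤ (Rch (R.erase s(par R r v, v)) r).card := by
    rw [← card_Rch hT]; exact Finset.card_le_card hsub
  have h2 := card_reach_le (R.erase s(par R r v, v)) r
  have he : s(par R r v, v) ∈ R := (par_spec hv hvr).1
  have hcard : R.card ≠ 0 := Finset.card_ne_zero_of_mem he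
  rw [Finset.card_erase_of_mem he] at h2
  omega
lemma near_iff {R : Finset (Sym2 V)} {r : V} (hT : IsRTree R r) (u v : V) :
    (s(u, v) ∈ R ∧ ReachE (R.erase s(u, v)) r u) ↔
      (ReachE R r v ∧ v ≠ r ∧ u = par R r v) := by
  constructor
  · rintro ⟨hmem, hnear⟩
    have hE : s(u, v) ∈ ((Rch R r).erase r).image (fun w => s(par R r w, w)) := by
      rw [image_par hT]; exact hmem
    rw [Finset.mem_image] at hE
    obtain ⟨w, hw, heq⟩ := hE
    rw [Finset.mem_erase, mem_Rch] at hw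
    have hwfar : ¬ ReachE (R.erase s(par R r w, w)) r w := far hT hw.2 hw.1
    rw [heq] at hwfar
    rcases Sym2.eq_iff.mp heq with ⟨h1, h2⟩ | ⟨h1, h2⟩
    · subst h2; exact ⟨hw.2, hw.1, h1.symm⟩
    · exfalso; subst h2; exact hwfar hnear
  · rintro ⟨hv, hvr, rfl⟩
    exact ⟨(par_spec hv hvr).1, par_near hv hvr⟩

open Classical in
noncomputable def sT (R : Finset (Sym2 V)) (r u v : V) : Finset V :=
  Finset.univ.filter (fun w => ReachE R r w ∧ ¬ ReachE (R.erase s(u, v)) r w)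

open Classical in
lemma mem_sT {R : Finset (Sym2 V)} {r u v w : V} :
    w ∈ sT R r u v ↔ ReachE R r w ∧ ¬ ReachE (R.erase s(u, v)) r w := by
  simp [sT]

lemma sT_subset {R : Finset (Sym2 V)} {r : V} (hT : IsRTree R r) {v c : V}
    (hv : ReachE R r v) (hvr : v ≠ r) (hc : ReachE R r c) (hcr : c ≠ r)
    (hpc : v = par R r c) :
    sT R r v c ⊆ (sT R r (par R r v) v).erase v := by
  intro w hw
  rw [mem_sT] at hw
  obtain ⟨hwre, hwnot⟩ := hw
  have hvnear : ReachE (R.erase s(v, c)) r v := by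
    have := par_near hc hcr; rwa [← hpc] at this
  have hcfar : ¬ ReachE (R.erase s(v, c)) r c := by
    have := far hT hc hcr; rwa [← hpc] at this
  have hvfar : ¬ ReachE (R.erase s(par R r v, v)) r v := far hT hv hvr
  rw [Finset.mem_erase, mem_sT]
  refine ⟨?_, hwre, ?_⟩
  · rintro rfl; exact hwnot hvnear
  · intro hbad
    rcases reach_erase_or hbad v c with h | h | h
    · exact hwnot
        (reach_mono (Finset.erase_subset_erase _ (Finset.erase_subset _ _)) h)
    · exact hvfar (reach_mono (Finset.erase_subset _ _) h)
    · exact hcfar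
        (reach_mono (Finset.erase_subset_erase _ (Finset.erase_subset _ _)) h)
lemma sT_disjoint {R : Finset (Sym2 V)} {r : V} (hT : IsRTree R r) {v c c' : V}
    (hc : ReachE R r c) (hcr : c ≠ r) (hpc : v = par R r c)
    (hc' : ReachE R r c') (hcr' : c' ≠ r) (hpc' : v = par R r c')
    (hne : c ≠ c') :
    Disjoint (sT R r v c) (sT R r v c') := by
  have hvnc : ReachE (R.erase s(v, c)) r v := by
    have := par_near hc hcr; rwa [← hpc] at this
  have hcfar : ¬ ReachE (R.erase s(v, c)) r c := by
    have := far hT hc hcr; rwa [← hpc] at this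
  have hvnc' : ReachE (R.erase s(v, c')) r v := by
    have := par_near hc' hcr'; rwa [← hpc'] at this
  have hcfar' : ¬ ReachE (R.erase s(v, c')) r c' := by
    have := far hT hc' hcr'; rwa [← hpc'] at this
  have hecmem : s(v, c) ∈ R := by
    have := (par_spec hc hcr).1; rwa [← hpc] at this
  have hee : s(v, c) ≠ s(v, c') := by
    intro h
    rcases Sym2.eq_iff.mp h with ⟨_, h2⟩ | ⟨h1, h2⟩
    · exact hne h2
    · exact hne (h2.trans h1)
  have hedge : s(c, v) ∈ R.erase s(v, c') := by
    have hs : s(c, v) = s(v, c) := Sym2.eq_swap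
    rw [hs]
    exact Finset.mem_erase.mpr ⟨hee, hecmem⟩
  rw [Finset.disjoint_left]
  intro w hw hw'
  rw [mem_sT] at hw hw'
  obtain ⟨hwre, hwc⟩ := hw
  obtain ⟨_, hwc'⟩ := hw'
  have h1 : ReachE (R.erase s(v, c)) c w := by
    rcases reach_side hvnc hwre with h | h
    · exact absurd h hwc
    · exact h
  have h1' : ReachE (R.erase s(v, c')) c' w := by
    rcases reach_side hvnc' hwre with h | h
    · exact absurd h hwc'
    · exact h
  rcases reach_erase_or h1 v c' with h | h | h
  · -- reach c w avoiding both edges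
    have hcw : ReachE (R.erase s(v, c')) c w :=
      reach_mono (Finset.erase_subset_erase _ (Finset.erase_subset _ _)) h
    have : ReachE (R.erase s(v, c')) c' c := h1'.trans (reach_symm hcw)
    have hcv : ReachE (R.erase s(v, c')) c' v := this.tail hedge
    exact hcfar' (hvnc'.trans (reach_symm hcv))
  · -- reach c v avoiding e_c
    have hcv : ReachE (R.erase s(v, c)) c v :=
      reach_mono (Finset.erase_subset _ _) h
    exact hcfar (hvnc.trans (reach_symm hcv))
  · -- reach c c' avoiding both
    have hcc : ReachE (R.erase s(v, c')) c c' :=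
      reach_mono (Finset.erase_subset_erase _ (Finset.erase_subset _ _)) h
    have hcv : ReachE (R.erase s(v, c')) c' v := (reach_symm hcc).tail hedge
    exact hcfar' (hvnc'.trans (reach_symm hcv))
theorem stmt12' {V : Type} [Fintype V] [DecidableEq V] (G R : Finset (Sym2 V)) (r : V)
    (hRG : R ⊆ G) (hTree : IsRTree R r) (x : V × V → ℝ)
    (hx1 : ∀ u v : V, x (u, v) = 1 ↔
      (s(u, v) ∈ R ∧ ReachE (R.erase s(u, v)) r u))
    (hx01 : ∀ e : V × V, x e = 0 ∨ x e = 1) :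
    ∃ f : V × V → ℝ,
      (∀ e : V × V, 0 ≤ f e) ∧
      (∀ v : V, v ≠ r → ∑ u : V, x (u, v) ≤ 1) ∧
      (∑ u : V, x (u, r) = 0) ∧
      (∀ v : V, v ≠ r →
        (∑ u : V, f (u, v)) - (∑ u : V, f (v, u)) ≥ ∑ u : V, x (u, v)) ∧
      (∀ e : V × V, f e ≤ ((Fintype.card V : ℝ) - 1) * x e) := by
  classical
  have x_one : ∀ u v : V, x (u, v) = 1 ↔ (ReachE R r v ∧ v ≠ r ∧ u = par R r v) := by
    intro u v; rw [hx1]; exact near_iff hTree u v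
  have x_ne : ∀ u v : V, ¬ (ReachE R r v ∧ v ≠ r ∧ u = par R r v) → x (u, v) = 0 := by
    intro u v h
    rcases hx01 (u, v) with h0 | h1
    · exact h0
    · exact absurd ((x_one u v).mp h1) h
  have hsumx : ∀ v : V, v ≠ r → ReachE R r v → ∑ u : V, x (u, v) = 1 := by
    intro v hvr hv
    rw [Finset.sum_eq_single_of_mem (par R r v) (Finset.mem_univ _)]
    · exact (x_one _ v).mpr ⟨hv, hvr, rfl⟩
    · intro b _ hb
      exact x_ne b v (by rintro ⟨_, _, rfl⟩; exact hb rfl)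
  have hsumx0 : ∀ v : V, ¬ ReachE R r v → ∑ u : V, x (u, v) = 0 := by
    intro v hv
    refine Finset.sum_eq_zero fun u _ => x_ne u v ?_
    rintro ⟨h, _, _⟩; exact hv h
  refine ⟨fun p => if x p = 1 then ((sT R r p.1 p.2).card : ℝ) else 0, ?_, ?_, ?_, ?_, ?_⟩
  · intro e
    dsimp only
    split
    · positivity
    · exact le_refl 0
  · -- indegree ≤ 1
    intro v hvr
    by_cases hv : ReachE R r v
    · rw [hsumx v hvr hv]
    · rw [hsumx0 v hv]; norm_num
  · -- indegree of r is 0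
    refine Finset.sum_eq_zero fun u _ => x_ne u r ?_
    rintro ⟨_, h, _⟩; exact h rfl
  · -- flow conservation
    intro v hvr
    dsimp only
    by_cases hv : ReachE R r v
    · -- v in the tree
      have hxp : x (par R r v, v) = 1 := (x_one _ v).mpr ⟨hv, hvr, rfl⟩
      have hin : ∑ u : V, (if x (u, v) = 1 then ((sT R r u v).card : ℝ) else 0)
          = ((sT R r (par R r v) v).card : ℝ) := by
        rw [Finset.sum_eq_single_of_mem (par R r v) (Finset.mem_univ _)]
        · rw [if_pos hxp]
        · intro b _ hb
          rw [if_neg]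
          intro h1
          exact hb ((x_one b v).mp h1).2.2
      set C : Finset V := Finset.univ.filter (fun u => x (v, u) = 1) with hC
      have hout : ∑ u : V, (if x (v, u) = 1 then ((sT R r v u).card : ℝ) else 0)
          = ∑ c ∈ C, ((sT R r v c).card : ℝ) := (Finset.sum_filter _ _).symm
      have hCmem : ∀ c ∈ C, ReachE R r c ∧ c ≠ r ∧ v = par R r c := by
        intro c hc
        rw [hC, Finset.mem_filter] at hc
        exact (x_one v c).mp hc.2
      have hdisj : ∀ c ∈ C, ∀ c' ∈ C, c ≠ c' →
          Disjoint (sT R r v c) (sT R r v c') := by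
        intro c hc c' hc' hne
        obtain ⟨h1, h2, h3⟩ := hCmem c hc
        obtain ⟨h1', h2', h3'⟩ := hCmem c' hc'
        exact sT_disjoint hTree h1 h2 h3 h1' h2' h3' hne
      have hsubU : C.biUnion (fun c => sT R r v c) ⊆ (sT R r (par R r v) v).erase v := by
        refine Finset.biUnion_subset.mpr fun c hc => ?_
        obtain ⟨h1, h2, h3⟩ := hCmem c hc
        exact sT_subset hTree hv hvr h1 h2 h3
      have hvmem : v ∈ sT R r (par R r v) v := mem_sT.mpr ⟨hv, far hTree hv hvr⟩
      have hkey : (∑ c ∈ C, (sT R r v c).card) + 1 ≤ (sT R r (par R r v) v).card := by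
        have hbU := Finset.card_biUnion hdisj
        have hle := Finset.card_le_card hsubU
        rw [hbU] at hle
        have := Finset.card_erase_of_mem hvmem
        have hpos : 0 < (sT R r (par R r v) v).card := Finset.card_pos.mpr ⟨v, hvmem⟩
        omega
      rw [hin, hout, hsumx v hvr hv]
      have hcast : ∑ c ∈ C, ((sT R r v c).card : ℝ)
          = ((∑ c ∈ C, (sT R r v c).card : ℕ) : ℝ) := by push_cast; ring
      rw [hcast]
      have := (Nat.cast_le (α := ℝ)).mpr hkey
      push_cast at this
      linarith
    · -- v not in the tree: everything is 0
      have h1 : ∑ u : V, (if x (u, v) = 1 then ((sT R r u v).card : ℝ) else 0) = 0 := by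
        refine Finset.sum_eq_zero fun u _ => ?_
        rw [if_neg]
        intro h1; exact hv ((x_one u v).mp h1).1
      have h2 : ∑ u : V, (if x (v, u) = 1 then ((sT R r v u).card : ℝ) else 0) = 0 := by
        refine Finset.sum_eq_zero fun u _ => ?_
        rw [if_neg]
        intro h1
        obtain ⟨hu, hur, hp⟩ := (x_one v u).mp h1
        exact hv (hp ▸ (par_spec hu hur).2.2)
      rw [h1, h2, hsumx0 v hv]
      norm_num
  · -- capacity
    intro e
    dsimp only
    rcases hx01 e with h0 | h1
    · rw [if_neg (by rw [h0]; norm_num), h0, mul_zero]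
    · rw [if_pos h1, h1, mul_one]
      obtain ⟨u, v⟩ := e
      obtain ⟨hvre, hvr, rfl⟩ := (x_one u v).mp h1
      have hsub : sT R r (par R r v) v ⊆ Finset.univ.erase r := by
        intro w hw
        rw [mem_sT] at hw
        rw [Finset.mem_erase]
        refine ⟨?_, Finset.mem_univ _⟩
        rintro rfl
        exact hw.2 Relation.ReflTransGen.refl
      have hle := Finset.card_le_card hsub
      rw [Finset.card_erase_of_mem (Finset.mem_univ r), Finset.card_univ] at hle
      have hpos : 0 < Fintype.card V := Fintype.card_pos_iff.mpr ⟨r⟩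
      have : ((sT R r (par R r v) v).card : ℝ) ≤ ((Fintype.card V - 1 : ℕ) : ℝ) :=
        Nat.cast_le.mpr hle
      rw [Nat.cast_sub hpos] at this
      simpa using this

/-- backward direction of Proposition 1: let `R ⊆ G` be a tree
containing `r`, and let `x` be its orientation away from `r` (on the bidirected graph:
`x(u,v) = 1` iff `s(u,v) ∈ R` and `u` stays connected to `r` after removing that edge,
i.e. `u` is the endpoint nearer to `r`). Then there exists `f ≥ 0` such that all the
MIP constraints hold: `x(δ⁻(v)) ≤ 1` for `v ≠ r`, `x(δ⁻(r)) = 0`,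
`f(δ⁻(v)) − f(δ⁺(v)) ≥ x(δ⁻(v))` for `v ≠ r`, and `0 ≤ f(e) ≤ (|V|−1)·x(e)`. -/
theorem stmt12 {V : Type} [Fintype V] [DecidableEq V] (G R : Finset (Sym2 V)) (r : V)
    (hRG : R ⊆ G) (hTree : IsRTree R r) (x : V × V → ℝ)
    (hx1 : ∀ u v : V, x (u, v) = 1 ↔
      (s(u, v) ∈ R ∧ ReachE (R.erase s(u, v)) r u))
    (hx01 : ∀ e : V × V, x e = 0 ∨ x e = 1) :
    ∃ f : V × V → ℝ,
      (∀ e : V × V, 0 ≤ f e) ∧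
      (∀ v : V, v ≠ r → ∑ u : V, x (u, v) ≤ 1) ∧
      (∑ u : V, x (u, r) = 0) ∧
      (∀ v : V, v ≠ r →
        (∑ u : V, f (u, v)) - (∑ u : V, f (v, u)) ≥ ∑ u : V, x (u, v)) ∧
      (∀ e : V × V, f e ≤ ((Fintype.card V : ℝ) - 1) * x e) := by
  exact stmt12' G R r hRG hTree x hx1 hx01
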